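/- Let G_i (i ∈ I) be groups and write G = lim← *_{i∈I} G_i. Suppose I = ⋃_{n<ω} I_n with I_n ⊆ I_{n+1}, and suppose x_n ∈ G satisfy p_{I_n}(x_n) = e for each n < ω. Then there exists a group homomorphism φ : lim← *_{n<ω} ℤ_n → G such that φ(δ_n) = x_n for each n < ω, where δ_n denotes the image in the inverse limit of the generator of the n-th copy ℤ_n of ℤ. -/
import Mathlib


open Monoid

noncomputable section
open scoped Classical

variable (I : Type*) (G : I → Type*) [∀ i, Group (G i)]

/-- The canonical bonding homomorphism `p_{XY} : *_{i∈Y} G_i → *_{i∈X} G_i` for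
finite subsets `X ⊆ Y` of `I`: identity on each `G_i` with `i ∈ X`, trivial otherwise. -/
def bond {I : Type*} {G : I → Type*} [∀ i, Group (G i)] {X Y : Finset I} (_ : X ⊆ Y) :
    CoprodI (fun i : Y => G i) →* CoprodI (fun i : X => G i) :=
  CoprodI.lift fun i =>
    if h : (i : I) ∈ X then (CoprodI.of (M := fun j : X => G j) (i := ⟨(i : I), h⟩)) else 1

/-- The canonical inclusion `*_{i∈X} G_i → *_{i∈Y} G_i` for finite `X ⊆ Y`. -/
def incl {I : Type*} {G : I → Type*} [∀ i, Group (G i)] {X Y : Finset I} (h : X ⊆ Y) :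
    CoprodI (fun i : X => G i) →* CoprodI (fun i : Y => G i) :=
  CoprodI.lift fun i => (CoprodI.of (M := fun j : Y => G j) (i := ⟨(i : I), h i.2⟩))

lemma bond_incl {I : Type*} {G : I → Type*} [∀ i, Group (G i)] (S : Set I)
    {X Y : Finset I} (h : X ⊆ Y)
    (z : CoprodI (fun i : (Y.filter (· ∈ S)) => G i)) :
    bond h (incl (Finset.filter_subset _ Y) z)
      = incl (Finset.filter_subset (· ∈ S) X)
          (bond (Finset.filter_subset_filter _ h) z) := by
  have : (bond h).comp (incl (Finset.filter_subset (· ∈ S) Y))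
      = (incl (Finset.filter_subset (· ∈ S) X)).comp
          (bond (G := G) (Finset.filter_subset_filter (· ∈ S) h)) := by
    apply CoprodI.ext_hom
    intro i
    ext g
    obtain ⟨i, hi⟩ := i
    have hiS : i ∈ S := (Finset.mem_filter.1 hi).2
    have hiY : i ∈ Y := (Finset.mem_filter.1 hi).1
    simp only [MonoidHom.comp_apply, incl, bond, CoprodI.lift_of]
    by_cases hx : i ∈ X
    · rw [dif_pos hx, dif_pos (Finset.mem_filter.2 ⟨hx, hiS⟩), CoprodI.lift_of]
    · rw [dif_neg hx, dif_neg (fun hc => hx (Finset.mem_filter.1 hc).1),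
        MonoidHom.one_apply, MonoidHom.one_apply, map_one]
  exact DFunLike.congr_fun this z

/-- The unrestricted free product `lim← *_{i∈I} G_i`: the inverse limit of the free
products of finite subfamilies, realized as the subgroup of the product consisting of
families compatible under the bonding maps. -/
def UFP : Subgroup (Π X : Finset I, CoprodI (fun i : X => G i)) where
  carrier := {x | ∀ ⦃X Y : Finset I⦄ (h : X ⊆ Y), bond h (x Y) = x X}
  one_mem' := by intro X Y h; simp
  mul_mem' := by intro a b ha hb X Y h; simp only [Pi.mul_apply, map_mul, ha h, hb h]
  inv_mem' := by intro a ha X Y h; simp only [Pi.inv_apply, map_inv, ha h]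

/-- The canonical projection `p_S : lim← *_{i∈I} G_i → lim← *_{i∈I} G_i` for `S ⊆ I`,
defined by `p_S(x)(X) = x(X ∩ S)` (included into `*_{i∈X} G_i`). -/
def pProj (S : Set I) : UFP I G →* UFP I G where
  toFun x := ⟨fun X => incl (Finset.filter_subset (· ∈ S) X) (x.1 (X.filter (· ∈ S))),
    by
      intro X Y h
      rw [bond_incl S h, x.2 (Finset.filter_subset_filter _ h)]⟩
  map_one' := by ext X; simp
  map_mul' a b := by ext X; simp

/-- The canonical projection of the inverse limit to its `X₀`-th coordinate. -/
def finProj (X₀ : Finset I) : UFP I G →* CoprodI (fun i : X₀ => G i) :=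
  (Pi.evalMonoidHom _ X₀).comp (UFP I G).subtype

/-- `supp(h) = { X ⊆ I : p_X(g) = e → h(g) = e for all g }`. -/
def supp {F : Type*} [Group F] (h : UFP I G →* F) : Set (Set I) :=
  {X | ∀ g : UFP I G, pProj I G X g = 1 → h g = 1}

/-- An ultrafilter is countably complete if it is closed under countable intersections. -/
def CountablyComplete {I : Type*} (u : Ultrafilter I) : Prop :=
  ∀ s : ℕ → Set I, (∀ n, s n ∈ u) → (⋂ n, s n) ∈ u


/-- The canonical bonding homomorphism `p_{mn} : *_{k<n} ℤ_k → *_{k<m} ℤ_k` for `m ≤ n`: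
identity on `ℤ_k` for `k < m`, trivial on `ℤ_k` for `m ≤ k < n`. -/
def zbond {m n : ℕ} (_ : m ≤ n) :
    CoprodI (fun _ : Fin n => Multiplicative ℤ) →* CoprodI (fun _ : Fin m => Multiplicative ℤ) :=
  CoprodI.lift fun k =>
    if h : (k : ℕ) < m then
      (CoprodI.of (M := fun _ : Fin m => Multiplicative ℤ) (i := ⟨(k : ℕ), h⟩)) else 1

/-- The inverse limit `lim← *_{n<ω} ℤ_n` of the finite free products of copies of `ℤ`
under the canonical bonding maps. -/
def ZLim : Subgroup (Π n : ℕ, CoprodI (fun _ : Fin n => Multiplicative ℤ)) where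
  carrier := {x | ∀ ⦃m n : ℕ⦄ (h : m ≤ n), zbond h (x n) = x m}
  one_mem' := by intro m n h; simp
  mul_mem' := by intro a b ha hb m n h; simp only [Pi.mul_apply, map_mul, ha h, hb h]
  inv_mem' := by intro a ha m n h; simp only [Pi.inv_apply, map_inv, ha h]

/-- The canonical projection `p_m : lim← *_{n<ω} ℤ_n → *_{k<m} ℤ_k` to the `m`-th coordinate. -/
def zProj (m : ℕ) : ZLim →* CoprodI (fun _ : Fin m => Multiplicative ℤ) :=
  (Pi.evalMonoidHom _ m).comp ZLim.subtype

/-- `δ_n ∈ lim← *_{n<ω} ℤ_n`: the element determined by the generator of the `n`-th copy of `ℤ`. -/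
def delta (n : ℕ) : ZLim :=
  ⟨fun m => if h : n < m then
      CoprodI.of (M := fun _ : Fin m => Multiplicative ℤ) (i := ⟨n, h⟩)
        (Multiplicative.ofAdd (1 : ℤ))
    else 1, by
    intro m m' h
    dsimp only
    by_cases hn : n < m'
    · rw [dif_pos hn]
      simp only [zbond, CoprodI.lift_of]
      by_cases hnm : n < m
      · rw [dif_pos hnm, dif_pos hnm]
      · rw [dif_neg hnm, dif_neg hnm, MonoidHom.one_apply]
    · rw [dif_neg hn, dif_neg (fun hc => hn (lt_of_lt_of_le hc h)), map_one]⟩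


section MyAux
variable {I' : Type*} {G' : I' → Type*} [∀ i, Group (G' i)]

lemma my_bond_incl_self {X Y : Finset I'} (h : X ⊆ Y) (z : CoprodI (fun i : X => G' i)) :
    bond h (incl h z) = z := by
  have he : (bond h).comp (incl (G := G') h) = MonoidHom.id _ := by
    apply CoprodI.ext_hom
    intro i
    ext g
    simp only [MonoidHom.comp_apply, incl, bond, CoprodI.lift_of, MonoidHom.id_apply]
    rw [dif_pos (show ((⟨(i : I'), h i.2⟩ : Y) : I') ∈ X from i.2)]
  exact DFunLike.congr_fun he z

lemma my_comp_one {S : Set I'} {g : UFP I' G'} (hg : pProj I' G' S g = 1) {X : Finset I'}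
    (hX : ∀ i ∈ X, i ∈ S) : g.1 X = 1 := by
  have h1 : incl (Finset.filter_subset (· ∈ S) X) (g.1 (X.filter (· ∈ S))) = 1 := by
    have := congrFun (congrArg Subtype.val hg) X
    simpa [pProj] using this
  have h2 : g.1 (X.filter (· ∈ S)) = 1 := by
    have := congrArg (bond (Finset.filter_subset (· ∈ S) X)) h1
    rwa [my_bond_incl_self, map_one] at this
  rwa [Finset.filter_true_of_mem hX] at h2

end MyAux

/-- **Lemma 2**: if `I = ⋃_{n<ω} I_n` with `I_n ⊆ I_{n+1}` and `x_n ∈ lim← *_{i∈I} G_i`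
satisfy `p_{I_n}(x_n) = e`, then there is a homomorphism `φ : lim← *_{n<ω} ℤ_n →
lim← *_{i∈I} G_i` with `φ(δ_n) = x_n` for each `n`. -/
theorem joint_homomorphism {I : Type*} (G : I → Type*) [∀ i, Group (G i)]
    (Iseq : ℕ → Set I) (hmono : ∀ n, Iseq n ⊆ Iseq (n + 1))
    (hcover : (⋃ n, Iseq n) = Set.univ)
    (x : ℕ → UFP I G) (hx : ∀ n, pProj I G (Iseq n) (x n) = 1) :
    ∃ φ : ZLim →* UFP I G, ∀ n, φ (delta n) = x n := by
  classical
  have hm : Monotone Iseq := monotone_nat_of_le_succ hmono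
  -- every finite set is covered by some `Iseq n`
  have hex : ∀ X : Finset I, ∃ n, ∀ i ∈ X, i ∈ Iseq n := by
    intro X
    induction X using Finset.induction_on with
    | empty => exact ⟨0, by simp⟩
    | @insert a X _ ih =>
      obtain ⟨n, hn⟩ := ih
      have ha : a ∈ ⋃ k, Iseq k := by rw [hcover]; trivial
      obtain ⟨m, hmem⟩ := Set.mem_iUnion.1 ha
      refine ⟨max n m, fun i hi => ?_⟩
      rcases Finset.mem_insert.1 hi with rfl | hi
      · exact hm (le_max_right n m) hmem
      · exact hm (le_max_left n m) (hn i hi)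
  -- the auxiliary homomorphisms
  set ψ : ∀ (m : ℕ) (X : Finset I),
      CoprodI (fun _ : Fin m => Multiplicative ℤ) →* CoprodI (fun i : X => G i) :=
    fun m X => CoprodI.lift fun k : Fin m => zpowersHom _ ((x k).1 X) with hψ
  -- components of `x k` vanish on subsets of `Iseq k`
  have hkill : ∀ (k : ℕ) (X : Finset I), (∀ i ∈ X, i ∈ Iseq k) → (x k).1 X = 1 :=
    fun k X hX => my_comp_one (hx k) hX
  -- bond compatibility
  have hbond : ∀ (m : ℕ) {X Y : Finset I} (h : X ⊆ Y)
      (w : CoprodI (fun _ : Fin m => Multiplicative ℤ)),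
      bond h (ψ m Y w) = ψ m X w := by
    intro m X Y h w
    have : (bond h).comp (ψ m Y) = ψ m X := by
      apply CoprodI.ext_hom
      intro k
      ext
      simp only [hψ, MonoidHom.comp_apply, CoprodI.lift_of, zpowersHom_apply,
        toAdd_ofAdd, zpow_one]
      exact (x k).2 h
    exact DFunLike.congr_fun this w
  -- stability in the index
  have hstab : ∀ (X : Finset I) {m m' : ℕ} (h : m ≤ m'), (∀ i ∈ X, i ∈ Iseq m) →
      ∀ z : ZLim, ψ m X (z.1 m) = ψ m' X (z.1 m') := by
    intro X m m' h hX z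
    rw [← z.2 h]
    have : (ψ m X).comp (zbond h) = ψ m' X := by
      apply CoprodI.ext_hom
      intro k
      ext
      simp only [hψ, MonoidHom.comp_apply, zbond, CoprodI.lift_of, zpowersHom_apply,
        toAdd_ofAdd, zpow_one]
      by_cases hk : (k : ℕ) < m
      · rw [dif_pos hk]
        simp [hψ]
      · rw [dif_neg hk]
        have : (x (k : ℕ)).1 X = 1 :=
          hkill _ X fun i hi => hm (le_of_not_gt hk) (hX i hi)
        simp [this]
    exact DFunLike.congr_fun this (z.1 m')
  set nn : Finset I → ℕ := fun X => Nat.find (hex X) with hnn'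
  have hnn : ∀ (X : Finset I), ∀ i ∈ X, i ∈ Iseq (nn X) := fun X => Nat.find_spec (hex X)
  refine ⟨{ toFun := fun z => ⟨fun X => ψ (nn X) X (z.1 (nn X)), ?_⟩,
            map_one' := ?_, map_mul' := ?_ }, ?_⟩
  · intro X Y h
    dsimp only
    rw [hstab Y (le_max_right (nn X) (nn Y)) (hnn Y) z,
      hstab X (le_max_left (nn X) (nn Y)) (hnn X) z]
    exact hbond _ h _
  · apply Subtype.ext
    funext X
    have h1 : ((1 : ZLim) : Π n : ℕ, CoprodI (fun _ : Fin n => Multiplicative ℤ)) (nn X) = 1 :=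
      rfl
    simp [h1]
  · intro a b
    apply Subtype.ext
    funext X
    have h1 : ((a * b : ZLim) : Π n : ℕ, CoprodI (fun _ : Fin n => Multiplicative ℤ)) (nn X)
        = a.1 (nn X) * b.1 (nn X) := rfl
    simp [h1]
  · intro n
    apply Subtype.ext
    funext X
    show ψ (nn X) X ((delta n).1 (nn X)) = (x n).1 X
    rw [hstab X (le_max_left (nn X) (n + 1)) (hnn X) (delta n)]
    have hlt : n < max (nn X) (n + 1) := lt_of_lt_of_le (Nat.lt_succ_self n)
      (le_max_right _ _)
    have hd : (delta n).1 (max (nn X) (n + 1))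
        = CoprodI.of (M := fun _ : Fin (max (nn X) (n + 1)) => Multiplicative ℤ)
            (i := ⟨n, hlt⟩) (Multiplicative.ofAdd (1 : ℤ)) := by
      simp only [delta, dif_pos hlt]
    rw [hd]
    simp [hψ]

end
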